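/- Let m ≥ 1 be an integer. If m is even, then lim_{t→1⁻} Σ_{k=1}^∞ (−1)^{k+1} t^k k^m = 0. If m = 2n − 1 is odd, then lim_{t→1⁻} Σ_{k=1}^∞ (−1)^{k+1} t^k k^m = (−1)^{n+1} t_n / 2. (For each 0 < t < 1 the series converges absolutely.) -/

import Mathlib

/-- The tangent numbers `t_n = (4^n − 1)|B_{2n}|/n`, so that
`tan(x/2) = Σ_{n≥1} t_n x^{2n−1}/(2n−1)!`. -/
noncomputable def tangentNum (n : ℕ) : ℝ :=
  ((4 : ℝ) ^ n - 1) * |((bernoulli (2 * n) : ℚ) : ℝ)| / n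

section AbelAux

open Finset PowerSeries Filter
open Real (pi)

private theorem two_eq_C : (2 : ℚ⟦X⟧) = PowerSeries.C 2 :=
  (map_ofNat (PowerSeries.C (R := ℚ)) 2).symm

private theorem rescale_two_bps :
    rescale (2:ℚ) (bernoulliPowerSeries ℚ) * (exp ℚ + 1) = 2 * bernoulliPowerSeries ℚ := by
  have hexp : exp ℚ - 1 ≠ 0 := by
    simp only [exp, PowerSeries.ext_iff, Ne, not_forall]
    use 1
    simp [Nat.factorial_ne_zero]
  apply mul_right_cancel₀ hexp
  have h := bernoulliPowerSeries_mul_exp_sub_one ℚ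
  have h2 := congrArg (rescale (2:ℚ)) h
  rw [map_mul, map_sub, map_one] at h2
  have he : rescale (2:ℚ) (exp ℚ) = exp ℚ ^ 2 := by
    rw [exp_pow_eq_rescale_exp]; norm_num
  rw [he] at h2
  have hX : rescale (2:ℚ) (X : ℚ⟦X⟧) = 2 * X := by
    ext n
    rw [coeff_rescale, two_eq_C, coeff_C_mul]
    rcases n with _|_|n <;> simp [coeff_X]
  rw [hX] at h2
  calc rescale (2:ℚ) (bernoulliPowerSeries ℚ) * (exp ℚ + 1) * (exp ℚ - 1)
      = rescale (2:ℚ) (bernoulliPowerSeries ℚ) * (exp ℚ ^ 2 - 1) := by ring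
    _ = 2 * X := h2
    _ = 2 * (bernoulliPowerSeries ℚ * (exp ℚ - 1)) := by rw [h]
    _ = 2 * bernoulliPowerSeries ℚ * (exp ℚ - 1) := by ring

private theorem sum_choose_two_pow_mul_bernoulli (n : ℕ) :
    ∑ i ∈ range (n+1), (n.choose i : ℚ) * 2^i * bernoulli i = (2 - 2^n) * bernoulli n := by
  have hc := congrArg (PowerSeries.coeff n) rescale_two_bps
  rw [mul_add, mul_one, map_add, PowerSeries.coeff_mul, two_eq_C, coeff_C_mul] at hc
  simp only [bernoulliPowerSeries, coeff_rescale, coeff_mk, coeff_exp,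
    Algebra.algebraMap_self, RingHom.id_apply] at hc
  rw [Finset.Nat.sum_antidiagonal_eq_sum_range_succ_mk] at hc
  have hn : (n.factorial : ℚ) ≠ 0 := mod_cast n.factorial_ne_zero
  have key : ∑ k ∈ range (n + 1),
        2 ^ k * (bernoulli k / k.factorial) * (1 / (n - k).factorial)
      = (2 - 2^n) * bernoulli n / n.factorial := by
    have hr : (2 - 2^n) * bernoulli n / n.factorial
        = 2 * (bernoulli n / n.factorial) - 2 ^ n * (bernoulli n / n.factorial) := by
      ring
    rw [hr]
    linarith [hc]
  have h3 : ∀ k ∈ range (n+1), (n.choose k : ℚ) * 2^k * bernoulli k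
      = (n.factorial : ℚ) * (2 ^ k * (bernoulli k / k.factorial) * (1 / (n - k).factorial)) := by
    intro k hk
    rw [mem_range] at hk
    have hk' : k ≤ n := Nat.lt_succ_iff.mp hk
    rw [Nat.cast_choose ℚ hk']
    have h1 : (k.factorial : ℚ) ≠ 0 := mod_cast k.factorial_ne_zero
    have h2 : ((n - k).factorial : ℚ) ≠ 0 := mod_cast (n - k).factorial_ne_zero
    field_simp
  rw [sum_congr rfl h3, ← mul_sum, key, mul_div_cancel₀ _ hn]

/-- The Abel mean values as rationals. -/
private noncomputable def Gq (m : ℕ) : ℚ := (2^(m+1) - 1) * bernoulli' (m+1) / (m+1)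

/-- Real version. -/
private noncomputable def Gr (m : ℕ) : ℝ := ((Gq m : ℚ) : ℝ)

private theorem Gq_rec (m : ℕ) (hm : 1 ≤ m) :
    2 * Gq m + ∑ j ∈ range m, (m.choose j : ℚ) * (-1)^(m-j) * Gq j = 0 := by
  have hm1 : ((m : ℚ) + 1) ≠ 0 := by positivity
  have claim : ∑ j ∈ range m, (m.choose j : ℚ) * (-1)^(m-j) * Gq j
      = (-1)^(m+1) / (m+1) *
        ∑ i ∈ range (m+1), ((m+1).choose i : ℚ) * (2^i - 1) * bernoulli i := by
    rw [sum_range_succ' (fun i => ((m+1).choose i : ℚ) * (2^i - 1) * bernoulli i)]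
    simp only [pow_zero, sub_self, mul_zero, zero_mul, add_zero]
    rw [mul_sum, ← sum_congr rfl]
    intro j hj
    rw [mem_range] at hj
    have hchoose : ((m+1).choose (j+1) : ℚ) * (j+1) = (m.choose j : ℚ) * (m+1) := by
      have := Nat.add_one_mul_choose_eq m j
      have : ((m+1) * m.choose j : ℚ) = ((m+1).choose (j+1) * (j+1) : ℕ) := by
        exact_mod_cast congrArg (Nat.cast (R := ℚ)) this
      push_cast at this
      linarith
    have hsign : ((-1 : ℚ))^(m-j) * (-1)^(j+1) = (-1)^(m+1) := by
      rw [← pow_add]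
      congr 1
      omega
    rw [Gq, bernoulli'_eq_bernoulli]
    have hj1 : ((j : ℚ) + 1) ≠ 0 := by positivity
    field_simp
    push_cast at hchoose ⊢
    linear_combination ((-1:ℚ)^(m+1) * ((2:ℚ)^(j+1) - 1) * bernoulli (j+1)) * hchoose -
      ((m.choose j : ℚ) * ((m:ℚ)+1) * ((2:ℚ)^(j+1)-1) * bernoulli (j+1)) * hsign
  have hsum2 : ∑ i ∈ range (m+1), ((m+1).choose i : ℚ) * (2^i - 1) * bernoulli i
      = (2 - 2^(m+2)) * bernoulli (m+1) := by
    have e : ∀ i ∈ range (m+1), ((m+1).choose i : ℚ) * (2^i - 1) * bernoulli i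
        = ((m+1).choose i : ℚ) * 2^i * bernoulli i - ((m+1).choose i : ℚ) * bernoulli i := by
      intro i _; ring
    rw [sum_congr rfl e, sum_sub_distrib]
    have hM := sum_choose_two_pow_mul_bernoulli (m+1)
    rw [sum_range_succ] at hM
    have hB := sum_bernoulli (m+1)
    rw [if_neg (by omega)] at hB
    simp only [Nat.choose_self, Nat.cast_one, one_mul] at hM
    rw [hB, sub_zero]
    have : (2:ℚ)^(m+2) = 2 * 2^(m+1) := by ring
    rw [this]
    linarith [hM]
  rw [claim, hsum2, Gq, bernoulli'_eq_bernoulli]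
  have h2 : (2:ℚ)^(m+2) = 2 * 2^(m+1) := by ring
  rw [h2]
  field_simp
  ring

/-- The function whose Abel limit we study. -/
private noncomputable def Sa (m : ℕ) (t : ℝ) : ℝ := ∑' k : ℕ, (-1:ℝ)^k * t^(k+1) * ((k:ℝ)+1)^m

private theorem summable1 (m : ℕ) {t : ℝ} (ht : |t| < 1) :
    Summable (fun k : ℕ => (-1:ℝ)^k * t^(k+1) * ((k:ℝ)+1)^m) := by
  have h : Summable fun k : ℕ => (k:ℝ)^m * |t|^k :=
    summable_pow_mul_geometric_of_norm_lt_one m (by rwa [Real.norm_eq_abs, abs_abs])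
  have h2 : Summable fun k : ℕ => ((k:ℝ)+1)^m * |t|^(k+1) := by
    have := (summable_nat_add_iff 1).mpr h
    refine this.congr fun k => ?_
    push_cast
    ring
  refine Summable.of_norm (h2.congr fun k => ?_)
  rw [Real.norm_eq_abs, abs_mul, abs_mul, abs_pow, abs_pow, abs_neg, abs_one, one_pow, one_mul,
    abs_pow]
  rw [abs_of_nonneg (by positivity : (0:ℝ) ≤ (k:ℝ)+1)]
  ring

private theorem summable2 (m : ℕ) {t : ℝ} (ht : |t| < 1) :
    Summable (fun k : ℕ => (-1:ℝ)^k * t^(k+1) * (k:ℝ)^m) := by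
  have h : Summable fun k : ℕ => (k:ℝ)^m * |t|^k :=
    summable_pow_mul_geometric_of_norm_lt_one m (by rwa [Real.norm_eq_abs, abs_abs])
  refine Summable.of_norm ((h.mul_left |t|).congr fun k => ?_)
  rw [Real.norm_eq_abs, abs_mul, abs_mul, abs_pow, abs_pow, abs_neg, abs_one, one_pow, one_mul,
    abs_pow, abs_of_nonneg (by positivity : (0:ℝ) ≤ (k:ℝ))]
  rw [pow_succ]
  ring

private theorem pw (m k : ℕ) : ((k:ℝ)+1)^m - (k:ℝ)^m
    = -∑ j ∈ range m, (m.choose j : ℝ) * (-1:ℝ)^(m-j) * ((k:ℝ)+1)^j := by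
  have h : (k:ℝ)^m = ∑ j ∈ range (m+1), ((k:ℝ)+1)^j * (-1:ℝ)^(m-j) * (m.choose j) := by
    have := add_pow ((k:ℝ)+1) (-1) m
    simp only [add_neg_cancel_right] at this
    exact this
  rw [h, sum_range_succ]
  simp only [Nat.sub_self, pow_zero, mul_one, Nat.choose_self, Nat.cast_one]
  rw [← sum_neg_distrib]
  have : ∀ x ∈ range m, -((m.choose x : ℝ) * (-1:ℝ)^(m-x) * ((k:ℝ)+1)^x)
      = -(((k:ℝ)+1)^x * (-1:ℝ)^(m-x) * (m.choose x : ℝ)) := by intro x _; ring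
  rw [sum_congr rfl this, sum_neg_distrib]
  ring

private theorem key (m : ℕ) (hm : 1 ≤ m) {t : ℝ} (ht : |t| < 1) :
    (1 + t) * Sa m t = -∑ j ∈ range m, (m.choose j : ℝ) * (-1:ℝ)^(m-j) * Sa j t := by
  have hb := summable2 m ht
  have ha := summable1 m ht
  have ht1 : t * Sa m t = -∑' k : ℕ, (-1:ℝ)^k * t^(k+1) * (k:ℝ)^m := by
    rw [Sa, ← tsum_mul_left]
    rw [Summable.tsum_eq_zero_add hb]
    have h0 : (-1:ℝ)^0 * t^(0+1) * ((0:ℕ):ℝ)^m = 0 := by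
      simp [zero_pow (by omega : m ≠ 0)]
    rw [h0, zero_add, ← tsum_neg]
    congr 1
    funext k
    push_cast
    ring
  have hsub : (1 + t) * Sa m t
      = ∑' k : ℕ, (-1:ℝ)^k * t^(k+1) * (((k:ℝ)+1)^m - (k:ℝ)^m) := by
    have := Summable.tsum_sub ha hb
    rw [add_mul, one_mul, ht1, Sa, ← sub_eq_add_neg, ← this]
    congr 1
    funext k
    ring
  rw [hsub]
  have hexp : ∀ k : ℕ, (-1:ℝ)^k * t^(k+1) * (((k:ℝ)+1)^m - (k:ℝ)^m)
      = ∑ j ∈ range m, -((m.choose j : ℝ) * (-1:ℝ)^(m-j) * ((-1:ℝ)^k * t^(k+1) * ((k:ℝ)+1)^j)) := by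
    intro k
    rw [pw m k, mul_neg, mul_sum, ← sum_neg_distrib]
    exact sum_congr rfl fun j _ => by ring
  rw [tsum_congr hexp, Summable.tsum_finsetSum (fun j _ => ((summable1 j ht).mul_left _).neg)]
  rw [← sum_neg_distrib]
  refine sum_congr rfl fun j _ => ?_
  rw [tsum_neg, tsum_mul_left, Sa]

private theorem Sa_zero {t : ℝ} (ht : |t| < 1) : Sa 0 t = t * (1 + t)⁻¹ := by
  rw [Sa]
  have h : ∀ k : ℕ, (-1:ℝ)^k * t^(k+1) * ((k:ℝ)+1)^0 = t * (-t)^k := by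
    intro k
    rw [pow_zero, neg_pow]
    ring
  rw [tsum_congr h, tsum_mul_left,
    tsum_geometric_of_norm_lt_one (by rwa [norm_neg, Real.norm_eq_abs]), sub_neg_eq_add]

private theorem Gr_zero : Gr 0 = 1/2 := by
  rw [Gr, Gq]
  norm_num [bernoulli'_one]

private theorem abs_lt_one_of_Ioo {t : ℝ} (h : t ∈ Set.Ioo (0:ℝ) 1) : |t| < 1 := by
  rw [abs_of_pos h.1]; exact h.2

private theorem main_tendsto (m : ℕ) :
    Tendsto (fun t => Sa m t) (nhdsWithin 1 (Set.Iio 1)) (nhds (Gr m)) := by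
  induction m using Nat.strong_induction_on with
  | _ m ih =>
    have hmem : Set.Ioo (0:ℝ) 1 ∈ nhdsWithin (1:ℝ) (Set.Iio 1) :=
      Ioo_mem_nhdsLT_of_mem (by constructor <;> norm_num)
    rcases Nat.eq_zero_or_pos m with rfl | hm
    · have heq : (fun t : ℝ => t * (1 + t)⁻¹) =ᶠ[nhdsWithin (1:ℝ) (Set.Iio 1)] fun t => Sa 0 t := by
        filter_upwards [hmem] with t ht
        exact (Sa_zero (abs_lt_one_of_Ioo ht)).symm
      refine Tendsto.congr' heq ?_
      have hc : Tendsto (fun t : ℝ => t * (1 + t)⁻¹) (nhdsWithin 1 (Set.Iio 1))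
          (nhds ((1:ℝ) * (1 + 1)⁻¹)) := by
        apply Tendsto.mono_left _ nhdsWithin_le_nhds
        exact (ContinuousAt.mul continuousAt_id
          ((continuousAt_id.const_add 1).inv₀ (by norm_num))).tendsto
      convert hc using 2
      rw [Gr_zero]; norm_num
    · have hlim : Tendsto
          (fun t : ℝ => (-∑ j ∈ range m, (m.choose j : ℝ) * (-1:ℝ)^(m-j) * Sa j t) / (1 + t))
          (nhdsWithin 1 (Set.Iio 1))
          (nhds ((-∑ j ∈ range m, (m.choose j : ℝ) * (-1:ℝ)^(m-j) * Gr j) / 2)) := by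
        apply Tendsto.div
        · exact (tendsto_finset_sum _ fun j hj =>
            (Tendsto.const_mul _ (ih j (mem_range.mp hj)))).neg
        · have h2 : Tendsto (fun t : ℝ => 1 + t) (nhdsWithin (1:ℝ) (Set.Iio 1)) (nhds (1 + 1)) :=
            Tendsto.mono_left (Continuous.tendsto (by continuity) 1) nhdsWithin_le_nhds
          norm_num at h2
          exact h2
        · norm_num
      have heq : (fun t : ℝ => (-∑ j ∈ range m, (m.choose j : ℝ) * (-1:ℝ)^(m-j) * Sa j t) / (1 + t))
          =ᶠ[nhdsWithin (1:ℝ) (Set.Iio 1)] fun t => Sa m t := by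
        filter_upwards [hmem] with t ht
        have h1t : (1:ℝ) + t ≠ 0 := by have := ht.1; linarith
        rw [← key m hm (abs_lt_one_of_Ioo ht), mul_comm, mul_div_assoc, div_self h1t, mul_one]
      refine Tendsto.congr' heq ?_
      convert hlim using 2
      have hq := Gq_rec m hm
      have hcast : ((∑ j ∈ range m, (m.choose j : ℚ) * (-1)^(m-j) * Gq j : ℚ) : ℝ)
          = ∑ j ∈ range m, (m.choose j : ℝ) * (-1:ℝ)^(m-j) * Gr j := by
        push_cast [Gr]
        rfl
      have : (2:ℝ) * Gr m + ∑ j ∈ range m, (m.choose j : ℝ) * (-1:ℝ)^(m-j) * Gr j = 0 := by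
        rw [← hcast, Gr]
        exact_mod_cast congrArg (fun q : ℚ => (q : ℝ)) hq
      linarith

private theorem bernoulli_sign (n : ℕ) (hn : 1 ≤ n) :
    ((bernoulli (2*n) : ℚ) : ℝ) = (-1:ℝ)^(n+1) * |((bernoulli (2*n) : ℚ) : ℝ)| := by
  have hs := hasSum_zeta_nat (k := n) (by omega)
  have h1 : (1:ℝ) ≤ (-1:ℝ)^(n+1) * 2^(2*n-1) * Real.pi^(2*n) * ((bernoulli (2*n):ℚ):ℝ)
      / ((2*n).factorial) := by
    have := le_hasSum hs 1 (fun j _ => by positivity)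
    simpa using this
  have hReal.pi := Real.pi_pos
  have hfac : (0:ℝ) < ((2*n).factorial : ℝ) := by positivity
  have hpos : (0:ℝ) < (-1:ℝ)^(n+1) * ((bernoulli (2*n):ℚ):ℝ) := by
    have hkey : (-1:ℝ)^(n+1) * ((bernoulli (2*n):ℚ):ℝ)
        = ((-1:ℝ)^(n+1) * 2^(2*n-1) * Real.pi^(2*n) * ((bernoulli (2*n):ℚ):ℝ) / ((2*n).factorial))
          * (((2*n).factorial : ℝ) / (2^(2*n-1) * Real.pi^(2*n))) := by
      field_simp
    rw [hkey]
    have : (0:ℝ) < (-1:ℝ)^(n+1) * 2^(2*n-1) * Real.pi^(2*n) * ((bernoulli (2*n):ℚ):ℝ)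
        / ((2*n).factorial) := lt_of_lt_of_le one_pos h1
    exact mul_pos this (by positivity)
  have habs : |((bernoulli (2*n):ℚ):ℝ)| = (-1:ℝ)^(n+1) * ((bernoulli (2*n):ℚ):ℝ) := by
    rw [← abs_of_pos hpos, abs_mul, abs_pow, abs_neg, abs_one, one_pow, one_mul]
  rw [habs, ← mul_assoc, ← pow_add]
  have : Even (n+1+(n+1)) := ⟨n+1, by ring⟩
  rw [this.neg_one_pow, one_mul]

end AbelAux

/-- Abel means of alternating power sums: for `m ≥ 1`,
`lim_{t→1⁻} Σ_{k≥1} (−1)^{k+1} t^k k^m` is `0` for even `m` and `(−1)^{n+1} t_n/2` for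
`m = 2n − 1`; for each `0 < t < 1` the series converges absolutely. -/
theorem abel_mean_alternating_power_sum (m : ℕ) (hm : 1 ≤ m) :
    (∀ t ∈ Set.Ioo (0 : ℝ) 1,
      Summable fun k : ℕ => (-1 : ℝ) ^ (k + 1 + 1) * t ^ (k + 1) * ((k : ℝ) + 1) ^ m) ∧
    (Even m →
      Filter.Tendsto
        (fun t : ℝ => ∑' k : ℕ, (-1 : ℝ) ^ (k + 1 + 1) * t ^ (k + 1) * ((k : ℝ) + 1) ^ m)
        (nhdsWithin 1 (Set.Iio 1)) (nhds 0)) ∧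
    (∀ n : ℕ, 1 ≤ n → m = 2 * n - 1 →
      Filter.Tendsto
        (fun t : ℝ => ∑' k : ℕ, (-1 : ℝ) ^ (k + 1 + 1) * t ^ (k + 1) * ((k : ℝ) + 1) ^ m)
        (nhdsWithin 1 (Set.Iio 1)) (nhds ((-1 : ℝ) ^ (n + 1) * tangentNum n / 2))) := by
  have hfun : (fun t : ℝ => ∑' k : ℕ, (-1:ℝ)^(k+1+1) * t^(k+1) * ((k:ℝ)+1)^m)
      = fun t => Sa m t := by
    funext t
    exact tsum_congr fun k => by ring
  refine ⟨?_, ?_, ?_⟩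
  · intro t ht
    exact (summable1 m (abs_lt_one_of_Ioo ht)).congr fun k => by ring
  · intro hev
    rw [hfun]
    have h0 : Gr m = 0 := by
      rw [Gr, Gq, bernoulli'_eq_zero_of_odd hev.add_one (by omega)]
      simp
    have := main_tendsto m
    rwa [h0] at this
  · intro n hn hmn
    rw [hfun]
    have h := main_tendsto m
    have hm1 : m + 1 = 2*n := by omega
    have hq : Gq m = (2^(2*n) - 1) * bernoulli (2*n) / (2*n) := by
      rw [Gq, hm1, ← bernoulli_eq_bernoulli'_of_ne_one (by omega : 2*n ≠ 1)]
      have hd : ((m:ℚ)+1) = 2*(n:ℚ) := by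
        have := congrArg (Nat.cast (R := ℚ)) hm1
        push_cast at this
        linarith
      rw [hd]
    have hqr : Gr m = ((2:ℝ)^(2*n) - 1) * ((bernoulli (2*n):ℚ):ℝ) / (2*(n:ℝ)) := by
      rw [Gr, hq]
      push_cast
      ring
    have hval : Gr m = (-1:ℝ)^(n+1) * tangentNum n / 2 := by
      have h4 : (2:ℝ)^(2*n) = 4^n := by
        rw [pow_mul]; norm_num
      rw [hqr, tangentNum, h4]
      have hb := bernoulli_sign n hn
      set b := |((bernoulli (2*n):ℚ):ℝ)| with hbdef
      rw [hb]
      have hn0 : ((n:ℝ)) ≠ 0 := by positivity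
      field_simp
    rwa [hval] at h
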